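/- arXiv:2112.11634 — 5 statements merged into one kernel-verified Lean document; each statement's English description precedes it below -/
import Mathlib

section
/- Lloyd's 15-puzzle is unsolvable: there is no sequence of elementary moves transforming the configuration with tiles 14 and 15 swapped (blank in the bottom-right corner) into the identity configuration. -/
/-- Two cells of the 4×4 grid are adjacent: differ by one in exactly one coordinate. -/
def Adj (b b' : Fin 4 × Fin 4) : Prop :=
  (b.1 = b'.1 ∧ (b.2.val = b'.2.val + 1 ∨ b'.2.val = b.2.val + 1)) ∨
  (b.2 = b'.2 ∧ (b.1.val = b'.1.val + 1 ∨ b'.1.val = b.1.val + 1))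

/-- Linear index of a cell in `Fin 16`. -/
def pos (b : Fin 4 × Fin 4) : Fin 16 :=
  ⟨b.1.val * 4 + b.2.val, by have := b.1.isLt; have := b.2.isLt; omega⟩

/-- One elementary move: the blank swaps with an adjacent tile. -/
def Move (s t : Equiv.Perm (Fin 16) × (Fin 4 × Fin 4)) : Prop :=
  Adj s.2 t.2 ∧ t.1 = Equiv.swap (pos s.2) (pos t.2) * s.1

/-- Reachability: reflexive-transitive closure of elementary moves. -/
def Reachable : (Equiv.Perm (Fin 16) × (Fin 4 × Fin 4)) →
    (Equiv.Perm (Fin 16) × (Fin 4 × Fin 4)) → Prop :=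
  Relation.ReflTransGen Move

/-- Lloyd's 15-puzzle is unsolvable: the configuration with tiles 14 and 15 swapped
(indices 13 and 14) and the blank at the bottom-right corner cannot reach the solved state. -/
theorem lloyd_unsolvable :
    ¬ Reachable (Equiv.swap (13 : Fin 16) 14, ((3 : Fin 4), (3 : Fin 4)))
      (1, ((3 : Fin 4), (3 : Fin 4))) := by
  have key : ∀ b b' : Fin 4 × Fin 4, Adj b b' → pos b ≠ pos b' ∧
      ((-1 : ℤˣ) ^ (b'.1.val + b'.2.val) = -(-1 : ℤˣ) ^ (b.1.val + b.2.val)) := by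
    unfold Adj
    decide
  set inv : Equiv.Perm (Fin 16) × (Fin 4 × Fin 4) → ℤˣ :=
    fun s => Equiv.Perm.sign s.1 * (-1) ^ (s.2.1.val + s.2.2.val) with hinv
  have step : ∀ {s t}, Move s t → inv t = inv s := by
    rintro ⟨σ, b⟩ ⟨τ, b'⟩ ⟨hadj, heq⟩
    obtain ⟨hne, hpar⟩ := key b b' hadj
    simp only [hinv]
    rw [show τ = _ from heq, map_mul, Equiv.Perm.sign_swap hne, hpar]
    simp [neg_mul, mul_neg, neg_neg, one_mul]
  have main : ∀ {s t}, Reachable s t → inv t = inv s := by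
    intro s t h
    induction h with
    | refl => rfl
    | tail _ hm ih => rw [step hm, ih]
  intro h
  have := main h
  simp [hinv, Equiv.Perm.sign_swap (show (13 : Fin 16) ≠ 14 by decide)] at this
end

section
/- The quantity sign(σ) · (−1)^(i+j), where σ is the tile configuration and (i,j) is the blank's cell, is invariant under every elementary move of the 15-puzzle. -/
/-- The quantity sign(σ)·(−1)^(i+j) is invariant under every elementary move. -/
theorem invariant_under_move (s t : Equiv.Perm (Fin 16) × (Fin 4 × Fin 4)) (h : Move s t) :
    Equiv.Perm.sign t.1 * (-1 : ℤˣ) ^ (t.2.1.val + t.2.2.val) =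
      Equiv.Perm.sign s.1 * (-1 : ℤˣ) ^ (s.2.1.val + s.2.2.val) := by
  obtain ⟨hadj, ht⟩ := h
  have hne : pos s.2 ≠ pos t.2 := by
    unfold pos
    rcases hadj with ⟨h1, h2⟩ | ⟨h1, h2⟩ <;>
      simp only [ne_eq, Fin.mk.injEq] <;>
      rw [Fin.ext_iff] at h1 <;> omega
  have hpar : (-1 : ℤˣ) ^ (t.2.1.val + t.2.2.val) =
      -(-1 : ℤˣ) ^ (s.2.1.val + s.2.2.val) := by
    rcases hadj with ⟨h1, h2⟩ | ⟨h1, h2⟩ <;> rw [Fin.ext_iff] at h1 <;>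
      rcases h2 with h2 | h2
    · have hs : s.2.1.val + s.2.2.val = (t.2.1.val + t.2.2.val) + 1 := by omega
      rw [hs, pow_succ]; simp
    · have hs : t.2.1.val + t.2.2.val = (s.2.1.val + s.2.2.val) + 1 := by omega
      rw [hs, pow_succ]; simp
    · have hs : s.2.1.val + s.2.2.val = (t.2.1.val + t.2.2.val) + 1 := by omega
      rw [hs, pow_succ]; simp
    · have hs : t.2.1.val + t.2.2.val = (s.2.1.val + s.2.2.val) + 1 := by omega
      rw [hs, pow_succ]; simp
  rw [ht, map_mul, Equiv.Perm.sign_swap hne, hpar]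
  simp [mul_comm, mul_assoc, mul_left_comm]
end

section
/- The set of permutations of the 15 tiles achievable by move sequences that return the blank to its original corner forms a subgroup of S₁₅ contained in the alternating group A₁₅. -/
open Equiv Equiv.Perm

lemma adj_symm {b b' : Fin 4 × Fin 4} (h : Adj b b') : Adj b' b := by
  simp only [Adj, Fin.ext_iff] at *
  omega

lemma adj_pos_ne {b b' : Fin 4 × Fin 4} (h : Adj b b') : pos b ≠ pos b' := by
  intro heq
  have h2 := congrArg Fin.val heq
  simp only [pos] at h2
  simp only [Adj, Fin.ext_iff] at h
  omega

lemma move_symm {s t} (h : Move s t) : Move t s := by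
  obtain ⟨ha, he⟩ := h
  refine ⟨?_, ?_⟩
  · exact adj_symm ha
  · rw [he, Equiv.swap_comm, ← mul_assoc, Equiv.swap_mul_self, one_mul]

lemma reachable_symm {s t} (h : Reachable s t) : Reachable t s := by
  induction h with
  | refl => exact Relation.ReflTransGen.refl
  | tail _ hst ih => exact Relation.ReflTransGen.head (move_symm hst) ih

lemma reachable_mul_right {s t} (g : Equiv.Perm (Fin 16)) (h : Reachable s t) :
    Reachable (s.1 * g, s.2) (t.1 * g, t.2) := by
  induction h with
  | refl => exact Relation.ReflTransGen.refl
  | tail _ hst ih =>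
      exact ih.tail ⟨hst.1, by rw [hst.2, mul_assoc]⟩

def cellSign (b : Fin 4 × Fin 4) : ℤˣ := (-1) ^ (b.1.val + b.2.val)

lemma adj_cellSign {b b' : Fin 4 × Fin 4} (h : Adj b b') : cellSign b' = -cellSign b := by
  have h1 : b'.1.val + b'.2.val = (b.1.val + b.2.val) + 1 ∨
      b.1.val + b.2.val = (b'.1.val + b'.2.val) + 1 := by
    simp only [Adj, Fin.ext_iff] at h
    omega
  unfold cellSign
  rcases h1 with h1 | h1 <;> rw [h1]
  · simp [pow_succ]
  · simp [pow_succ]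

lemma sign_invariant {s t} (h : Reachable s t) :
    sign t.1 * cellSign t.2 = sign s.1 * cellSign s.2 := by
  induction h with
  | refl => rfl
  | tail _ hst ih =>
      rw [← ih, hst.2, adj_cellSign hst.1, map_mul,
        Equiv.Perm.sign_swap (adj_pos_ne hst.1)]
      simp [mul_neg, neg_mul, neg_neg]

lemma sign_via (τ : Equiv.Perm (Fin 15)) (h1516 : (15:ℕ) ≤ 16) :
    sign (τ.viaEmbedding (Fin.castLEEmb h1516)) = sign τ := by
  unfold Equiv.Perm.viaEmbedding
  rw [Equiv.Perm.sign_extendDomain]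

/-- Permutations of the 15 tiles achievable with the blank returning to the corner form a
subgroup of S₁₅ contained in the alternating group A₁₅. -/
theorem corner_loop_perms_subgroup :
    ∃ H : Subgroup (Equiv.Perm (Fin 15)),
      (H : Set (Equiv.Perm (Fin 15))) =
        {τ | Reachable (1, ((3 : Fin 4), (3 : Fin 4)))
          (τ.viaEmbedding (Fin.castLEEmb (by omega)), ((3 : Fin 4), (3 : Fin 4)))} ∧
      H ≤ alternatingGroup (Fin 15) := by
  set ι : Fin 15 ↪ Fin 16 := Fin.castLEEmb (by omega)
  set c : Fin 4 × Fin 4 := ((3 : Fin 4), (3 : Fin 4))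
  have hv : ∀ τ : Equiv.Perm (Fin 15), τ.viaEmbedding ι = Equiv.Perm.viaEmbeddingHom ι τ :=
    fun τ => rfl
  refine ⟨{
    carrier := {τ | Reachable (1, c) (τ.viaEmbedding ι, c)}
    one_mem' := by
      show Reachable (1, c) ((1 : Equiv.Perm (Fin 15)).viaEmbedding ι, c)
      rw [hv, map_one]
      exact Relation.ReflTransGen.refl
    mul_mem' := by
      intro a b ha hb
      show Reachable (1, c) ((a * b).viaEmbedding ι, c)
      rw [hv, map_mul]
      have h1 := reachable_mul_right (b.viaEmbedding ι) ha
      simp only [one_mul] at h1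
      exact Relation.ReflTransGen.trans hb (by rw [hv] at h1 ⊢; exact h1)
    inv_mem' := by
      intro a ha
      show Reachable (1, c) (a⁻¹.viaEmbedding ι, c)
      have := reachable_mul_right ((a.viaEmbedding ι)⁻¹) (reachable_symm ha)
      simp only [mul_inv_cancel, one_mul] at this
      rw [hv, map_inv, ← hv]
      exact this
  }, rfl, ?_⟩
  intro τ hτ
  have h := sign_invariant hτ
  simp only at h
  rw [Equiv.Perm.mem_alternatingGroup]
  have : sign (τ.viaEmbedding ι) = 1 := by
    have := mul_right_cancel h
    simpa using this
  rw [sign_via] at this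
  exact this
end

section
/- A configuration of the 15-puzzle with the blank in the bottom-right corner is reachable from the solved state only if the tile permutation is even. -/
lemma inv_aux {s t : Equiv.Perm (Fin 16) × (Fin 4 × Fin 4)} (h : Reachable s t) :
    Equiv.Perm.sign t.1 * (-1) ^ (t.2.1.val + t.2.2.val)
      = Equiv.Perm.sign s.1 * (-1) ^ (s.2.1.val + s.2.2.val) := by
  induction h with
  | refl => rfl
  | tail _ hmv ih =>
    rename_i b c _
    obtain ⟨hadj, heq⟩ := hmv
    have hne : pos b.2 ≠ pos c.2 := by
      intro hp
      have : b.2.1.val * 4 + b.2.2.val = c.2.1.val * 4 + c.2.2.val := congrArg Fin.val hp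
      rcases hadj with ⟨h1, h2⟩ | ⟨h1, h2⟩
      · have := congrArg Fin.val h1; omega
      · have := congrArg Fin.val h1; omega
    have hsign : Equiv.Perm.sign c.1 = - Equiv.Perm.sign b.1 := by
      rw [heq, map_mul, Equiv.Perm.sign_swap hne, neg_one_mul]
    have hpar : ((-1 : ℤˣ)) ^ (c.2.1.val + c.2.2.val) = - (-1) ^ (b.2.1.val + b.2.2.val) := by
      rcases hadj with ⟨h1, h2⟩ | ⟨h1, h2⟩ <;> have hh := congrArg Fin.val h1 <;>
        rcases h2 with h2 | h2
      · rw [show b.2.1.val + b.2.2.val = (c.2.1.val + c.2.2.val) + 1 by omega, pow_succ, mul_neg, mul_one]; try rw [neg_neg]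
      · rw [show c.2.1.val + c.2.2.val = (b.2.1.val + b.2.2.val) + 1 by omega, pow_succ, mul_neg, mul_one]; try rw [neg_neg]
      · rw [show b.2.1.val + b.2.2.val = (c.2.1.val + c.2.2.val) + 1 by omega, pow_succ, mul_neg, mul_one]; try rw [neg_neg]
      · rw [show c.2.1.val + c.2.2.val = (b.2.1.val + b.2.2.val) + 1 by omega, pow_succ, mul_neg, mul_one]; try rw [neg_neg]
    rw [hsign, hpar, ← ih, neg_mul, mul_neg, neg_neg]

/-- A configuration with the blank in the bottom-right corner is reachable from the solved
state only if the tile permutation is even. -/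
theorem reachable_corner_sign (σ : Equiv.Perm (Fin 16))
    (h : Reachable (1, ((3 : Fin 4), (3 : Fin 4))) (σ, ((3 : Fin 4), (3 : Fin 4)))) :
    Equiv.Perm.sign σ = 1 := by
  have := inv_aux h
  simpa using this
end

section
/- Lloyd's configuration and the solved configuration lie in different equivalence classes of the reachability relation, and the invariant sign(σ)·(−1)^(i+j) distinguishes these classes: it equals 1 on the solved state's class and −1 on Lloyd's state's class. -/
/-- The invariant sign(σ)·(−1)^(i+j) of a puzzle state. -/
def I (s : Equiv.Perm (Fin 16) × (Fin 4 × Fin 4)) : ℤˣ :=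
  Equiv.Perm.sign s.1 * (-1) ^ (s.2.1.val + s.2.2.val)

lemma move_I {s t : Equiv.Perm (Fin 16) × (Fin 4 × Fin 4)} (h : Move s t) : I s = I t := by
  obtain ⟨hadj, heq⟩ := h
  have hne : pos s.2 ≠ pos t.2 := by
    have h1 := s.2.1.isLt; have h2 := s.2.2.isLt
    have h3 := t.2.1.isLt; have h4 := t.2.2.isLt
    intro hc
    have : s.2.1.val * 4 + s.2.2.val = t.2.1.val * 4 + t.2.2.val := congrArg Fin.val hc
    rcases hadj with ⟨he, ho⟩ | ⟨he, ho⟩ <;>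
      · have := congrArg Fin.val he; omega
  have hpar : ((-1 : ℤˣ)) ^ (t.2.1.val + t.2.2.val) = -(-1) ^ (s.2.1.val + s.2.2.val) := by
    have key : ∀ a b : ℕ, a = b + 1 → ((-1 : ℤˣ)) ^ a = -(-1) ^ b := by
      intro a b hab; subst hab; rw [pow_succ, mul_neg_one]
    rcases hadj with ⟨he, ho | ho⟩ | ⟨he, ho | ho⟩
    · have := congrArg Fin.val he
      have : s.2.1.val + s.2.2.val = (t.2.1.val + t.2.2.val) + 1 := by omega
      rw [key _ _ this, neg_neg]
    · have := congrArg Fin.val he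
      exact key _ _ (by omega)
    · have := congrArg Fin.val he
      have : s.2.1.val + s.2.2.val = (t.2.1.val + t.2.2.val) + 1 := by omega
      rw [key _ _ this, neg_neg]
    · have := congrArg Fin.val he
      exact key _ _ (by omega)
  simp only [I, heq, map_mul, Equiv.Perm.sign_swap hne, hpar]
  simp [neg_mul, mul_neg, neg_neg]

/-- I is constant on reachability classes, equals 1 on the solved state and −1 on
Lloyd's state, so these states lie in different equivalence classes. -/
theorem invariant_separates :
    (∀ s t, Reachable s t → I s = I t) ∧
    I (1, ((3 : Fin 4), (3 : Fin 4))) = 1 ∧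
    I (Equiv.swap (13 : Fin 16) 14, ((3 : Fin 4), (3 : Fin 4))) = -1 ∧
    ¬ Reachable (Equiv.swap (13 : Fin 16) 14, ((3 : Fin 4), (3 : Fin 4)))
      (1, ((3 : Fin 4), (3 : Fin 4))) := by
  have hconst : ∀ s t, Reachable s t → I s = I t := by
    intro s t h
    induction h with
    | refl => rfl
    | tail _ hmove ih => exact ih.trans (move_I hmove)
  have h1 : I (1, ((3 : Fin 4), (3 : Fin 4))) = 1 := by
    simp [I, Even.neg_one_pow (⟨3, rfl⟩ : Even 6)]
  have h2 : I (Equiv.swap (13 : Fin 16) 14, ((3 : Fin 4), (3 : Fin 4))) = -1 := by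
    have : Equiv.Perm.sign (Equiv.swap (13 : Fin 16) 14) = -1 :=
      Equiv.Perm.sign_swap (by decide)
    simp [I, this, Even.neg_one_pow (⟨3, rfl⟩ : Even 6)]
  exact ⟨hconst, h1, h2, fun h => by simp [hconst _ _ h, h1] at h2⟩
end
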